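/- Let G be a strongly connected signed digraph with mirror Laplacian L̂ = (W·L + Lᵀ·W)/2. Then G is structurally unbalanced if and only if the null space of L̂ is trivial, i.e., L̂·x = 0 implies x = 0 for x ∈ ℝⁿ. -/

import Mathlib

open Matrix BigOperators Filter

/-- In-degree of node `i`: sum of absolute values of the `i`-th row of `A`. -/
noncomputable def inDeg {n : ℕ} (A : Matrix (Fin n) (Fin n) ℝ) (i : Fin n) : ℝ := ∑ j, |A i j|

/-- Laplacian `L = Δ − A` of the signed digraph with adjacency matrix `A`. -/
noncomputable def lapOf {n : ℕ} (A : Matrix (Fin n) (Fin n) ℝ) : Matrix (Fin n) (Fin n) ℝ :=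
  Matrix.diagonal (inDeg A) - A

/-- Laplacian `L̄ = Δ − Ā` of the induced unsigned digraph. -/
noncomputable def lapBar {n : ℕ} (A : Matrix (Fin n) (Fin n) ℝ) : Matrix (Fin n) (Fin n) ℝ :=
  Matrix.diagonal (inDeg A) - Matrix.of (fun i j => |A i j|)

/-- `det(L̄_ii)`: determinant of `L̄` with its `i`-th row and column removed. -/
noncomputable def minorDet {n : ℕ} (A : Matrix (Fin n) (Fin n) ℝ) (i : Fin n) : ℝ :=
  Matrix.det ((lapBar A).submatrix (fun k : {j : Fin n // j ≠ i} => (k : Fin n))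
    (fun k : {j : Fin n // j ≠ i} => (k : Fin n)))

/-- `W = diag(det(L̄_11), …, det(L̄_nn))`. -/
noncomputable def Wmat {n : ℕ} (A : Matrix (Fin n) (Fin n) ℝ) : Matrix (Fin n) (Fin n) ℝ :=
  Matrix.diagonal (minorDet A)

/-- Mirror adjacency matrix `Â = (W·A + Aᵀ·W)/2`. -/
noncomputable def mirrorAdj {n : ℕ} (A : Matrix (Fin n) (Fin n) ℝ) : Matrix (Fin n) (Fin n) ℝ :=
  (1/2 : ℝ) • (Wmat A * A + Aᵀ * Wmat A)

/-- Mirror Laplacian `L̂ = (W·L + Lᵀ·W)/2`. -/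
noncomputable def mirrorLap {n : ℕ} (A : Matrix (Fin n) (Fin n) ℝ) : Matrix (Fin n) (Fin n) ℝ :=
  (1/2 : ℝ) • (Wmat A * lapOf A + (lapOf A)ᵀ * Wmat A)

/-- `(j, i)` is a directed edge when `a_ij ≠ 0`; strong connectivity: a directed
path between every ordered pair of distinct nodes. -/
def StronglyConnected {n : ℕ} (A : Matrix (Fin n) (Fin n) ℝ) : Prop :=
  ∀ i j : Fin n, i ≠ j → Relation.TransGen (fun u v => A v u ≠ 0) i j

/-- `σ` is the diagonal of a gauge transformation: each entry is `±1`. -/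
def IsGauge {n : ℕ} (σ : Fin n → ℝ) : Prop := ∀ i, σ i = 1 ∨ σ i = -1

/-- Structural balance: there is a gauge transformation `D = diag σ` with all entries
of `D·A·D` (entrywise `σ i * A i j * σ j`) nonnegative. -/
def StructBalanced {n : ℕ} (A : Matrix (Fin n) (Fin n) ℝ) : Prop :=
  ∃ σ : Fin n → ℝ, IsGauge σ ∧ ∀ i j, 0 ≤ σ i * A i j * σ j

/-- Improved Laplacian potential function
`Φ_e(x) = Σ_i Σ_j det(L̄_ii)·|a_ij|·(x_i − sgn(a_ij)·x_j)²`. -/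
noncomputable def PhiE {n : ℕ} (A : Matrix (Fin n) (Fin n) ℝ) (x : Fin n → ℝ) : ℝ :=
  ∑ i, ∑ j, minorDet A i * |A i j| * (x i - Real.sign (A i j) * x j) ^ 2

section Aux

variable {n : ℕ}

lemma sum_subtype_ne (g : Fin n → ℝ) (i : Fin n) :
    ∑ l : {j : Fin n // j ≠ i}, g ↑l = (∑ j, g j) - g i := by
  classical
  rw [← Finset.sum_subtype (Finset.univ.erase i) (by simp) g]
  rw [Finset.sum_erase_eq_sub (Finset.mem_univ i)]

lemma inDeg_pos_of_edge (A : Matrix (Fin n) (Fin n) ℝ) {k u : Fin n} (h : A k u ≠ 0) :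
    0 < inDeg A k := by
  have h1 : 0 < |A k u| := abs_pos.mpr h
  have h2 : |A k u| ≤ inDeg A k :=
    Finset.single_le_sum (f := fun j => |A k j|) (fun j _ => abs_nonneg _) (Finset.mem_univ u)
  linarith

lemma inDeg_pos (hn : 2 ≤ n) (A : Matrix (Fin n) (Fin n) ℝ) (hsc : StronglyConnected A)
    (k : Fin n) : 0 < inDeg A k := by
  have : Nontrivial (Fin n) := Fin.nontrivial_iff_two_le.mpr hn
  obtain ⟨j, hj⟩ := exists_ne k
  have hpath := hsc j k hj
  cases hpath with
  | single h => exact inDeg_pos_of_edge A h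
  | tail _ h => exact inDeg_pos_of_edge A h

/-- Kernel of `L̄` consists of constant vectors (strong connectivity). -/
lemma lapBar_ker_const (hn : 2 ≤ n) (A : Matrix (Fin n) (Fin n) ℝ)
    (hsc : StronglyConnected A) (x : Fin n → ℝ) (hx : lapBar A *ᵥ x = 0) :
    ∀ p q : Fin n, x p = x q := by
  classical
  have hn0 : 0 < n := by omega
  haveI : Nonempty (Fin n) := ⟨⟨0, hn0⟩⟩
  have key : ∀ k, inDeg A k * x k = ∑ j, |A k j| * x j := by
    intro k
    have h0 := congrFun hx k
    simp only [Matrix.mulVec, dotProduct, lapBar, Matrix.sub_apply, Matrix.diagonal_apply,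
      Matrix.of_apply, Pi.zero_apply] at h0
    have h1 : ∑ j, ((if k = j then inDeg A k else 0) - |A k j|) * x j
        = (∑ j, if k = j then inDeg A k * x j else 0) - ∑ j, |A k j| * x j := by
      rw [← Finset.sum_sub_distrib]
      refine Finset.sum_congr rfl fun j _ => ?_
      split <;> ring
    rw [h1, Finset.sum_ite_eq] at h0
    simp only [Finset.mem_univ, if_true] at h0
    linarith
  obtain ⟨p₀, _, hp₀⟩ := Finset.exists_max_image Finset.univ x Finset.univ_nonempty
  have hmax : ∀ j, x j ≤ x p₀ := fun j => hp₀ j (Finset.mem_univ j)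
  have prop : ∀ c u : Fin n, x c = x p₀ → A c u ≠ 0 → x u = x p₀ := by
    intro c u hc hcu
    by_contra hne
    have hu : x u < x p₀ := lt_of_le_of_ne (hmax u) hne
    have h1 : ∑ j, |A c j| * x j < ∑ j, |A c j| * x p₀ := by
      refine Finset.sum_lt_sum (fun j _ => mul_le_mul_of_nonneg_left (hmax j) (abs_nonneg _))
        ⟨u, Finset.mem_univ u, ?_⟩
      exact mul_lt_mul_of_pos_left hu (abs_pos.mpr hcu)
    have h2 : ∑ j, |A c j| * x p₀ = inDeg A c * x p₀ := by
      rw [inDeg, Finset.sum_mul]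
    have h3 := key c
    rw [hc] at h3
    linarith
  have hind : ∀ u : Fin n, Relation.TransGen (fun a b => A b a ≠ 0) u p₀ → x u = x p₀ := by
    intro u hpath
    induction hpath using Relation.TransGen.head_induction_on with
    | single h => exact prop p₀ _ rfl h
    | head h' _ ih2 => exact prop _ _ ih2 h'
  have hall : ∀ u : Fin n, x u = x p₀ := by
    intro u
    rcases eq_or_ne u p₀ with rfl | hu
    · rfl
    · exact hind u (hsc u p₀ hu)
  intro p q; rw [hall p, hall q]

end Aux

section MinorPos

variable {n : ℕ}

lemma minorDet_pos (hn : 2 ≤ n) (A : Matrix (Fin n) (Fin n) ℝ)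
    (hsc : StronglyConnected A) (i : Fin n) : 0 < minorDet A i := by
  classical
  haveI : Nontrivial (Fin n) := Fin.nontrivial_iff_two_le.mpr hn
  have hdpos : ∀ k, 0 < inDeg A k := inDeg_pos hn A hsc
  obtain ⟨j₁, hj₁⟩ := exists_ne i
  haveI hne_inst : Nonempty {j : Fin n // j ≠ i} := ⟨⟨j₁, hj₁⟩⟩
  set M : ℝ → Matrix {j : Fin n // j ≠ i} {j : Fin n // j ≠ i} ℝ := fun t =>
    Matrix.of fun k l =>
      (if k.1 = l.1 then inDeg A k.1 else 0) - t * |A k.1 l.1| with hMdef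
  have hM1 : minorDet A i = Matrix.det (M 1) := by
    unfold minorDet
    congr 1
    ext k l
    simp [lapBar, Matrix.diagonal_apply, hMdef]
  -- kernel triviality for t ∈ [0,1]
  have hker : ∀ t ∈ Set.Icc (0:ℝ) 1, ∀ v : {j : Fin n // j ≠ i} → ℝ, M t *ᵥ v = 0 → v = 0 := by
    intro t ht v hv
    by_contra hv0
    obtain ⟨k₀, _, hk₀⟩ := Finset.exists_max_image Finset.univ (fun l => |v l|)
      Finset.univ_nonempty
    set Mx := |v k₀| with hMxdef
    have hMx : ∀ l, |v l| ≤ Mx := fun l => hk₀ l (Finset.mem_univ l)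
    have hMxpos : 0 < Mx := by
      obtain ⟨l, hl⟩ := Function.ne_iff.mp hv0
      have : (0:ℝ) < |v l| := abs_pos.mpr hl
      linarith [hMx l]
    have key : ∀ k : {j : Fin n // j ≠ i},
        inDeg A k.1 * v k = t * ∑ l : {j : Fin n // j ≠ i}, |A k.1 l.1| * v l := by
      intro k
      have h0 := congrFun hv k
      simp only [Matrix.mulVec, dotProduct, hMdef, Matrix.of_apply, Pi.zero_apply] at h0
      have h1 : ∑ l : {j : Fin n // j ≠ i},
            ((if k.1 = l.1 then inDeg A k.1 else 0) - t * |A k.1 l.1|) * v l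
          = (∑ l : {j : Fin n // j ≠ i}, if k = l then inDeg A k.1 * v l else 0)
            - t * ∑ l : {j : Fin n // j ≠ i}, |A k.1 l.1| * v l := by
        rw [Finset.mul_sum, ← Finset.sum_sub_distrib]
        refine Finset.sum_congr rfl fun l _ => ?_
        rcases eq_or_ne k l with rfl | hkl
        · simp; ring
        · have hne : k.1 ≠ l.1 := fun h => hkl (Subtype.ext h)
          simp [hkl, hne]; ring
      rw [h1, Finset.sum_ite_eq] at h0
      simp only [Finset.mem_univ, if_true] at h0
      linarith
    have hsub : ∀ k : {j : Fin n // j ≠ i},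
        ∑ l : {j : Fin n // j ≠ i}, |A k.1 l.1| = inDeg A k.1 - |A k.1 i| := by
      intro k
      rw [sum_subtype_ne (fun j => |A k.1 j|) i, inDeg]
    have habs0 : ∀ k : {j : Fin n // j ≠ i},
        |∑ l : {j : Fin n // j ≠ i}, |A k.1 l.1| * v l|
          ≤ Mx * (inDeg A k.1 - |A k.1 i|) := by
      intro k
      calc |∑ l : {j : Fin n // j ≠ i}, |A k.1 l.1| * v l|
          ≤ ∑ l : {j : Fin n // j ≠ i}, abs (|A k.1 l.1| * v l) :=
            Finset.abs_sum_le_sum_abs _ _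
        _ = ∑ l : {j : Fin n // j ≠ i}, |A k.1 l.1| * |v l| := by
            refine Finset.sum_congr rfl fun l _ => ?_
            rw [abs_mul, abs_abs]
        _ ≤ ∑ l : {j : Fin n // j ≠ i}, |A k.1 l.1| * Mx :=
            Finset.sum_le_sum fun l _ => mul_le_mul_of_nonneg_left (hMx l) (abs_nonneg _)
        _ = Mx * (inDeg A k.1 - |A k.1 i|) := by
            rw [← Finset.sum_mul, hsub k]; ring
    have habs : ∀ k : {j : Fin n // j ≠ i}, |v k| = Mx →
        inDeg A k.1 * Mx ≤ t * (Mx * (inDeg A k.1 - |A k.1 i|)) := by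
      intro k hk
      have h1 : |inDeg A k.1 * v k| = inDeg A k.1 * Mx := by
        rw [abs_mul, abs_of_nonneg (le_of_lt (hdpos _)), hk]
      have h2 := key k
      calc inDeg A k.1 * Mx = |inDeg A k.1 * v k| := h1.symm
        _ = |t * ∑ l : {j : Fin n // j ≠ i}, |A k.1 l.1| * v l| := by rw [h2]
        _ = t * |∑ l : {j : Fin n // j ≠ i}, |A k.1 l.1| * v l| := by
            rw [abs_mul, abs_of_nonneg ht.1]
        _ ≤ t * (Mx * (inDeg A k.1 - |A k.1 i|)) :=
            mul_le_mul_of_nonneg_left (habs0 k) ht.1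
    rcases eq_or_lt_of_le ht.2 with ht1 | ht1
    · -- t = 1
      have claim : ∀ k : {j : Fin n // j ≠ i}, |v k| = Mx →
          A k.1 i = 0 ∧ ∀ l : {j : Fin n // j ≠ i}, A k.1 l.1 ≠ 0 → |v l| = Mx := by
        intro k hk
        have hb := habs k hk
        rw [ht1, one_mul] at hb
        have hAki : A k.1 i = 0 := by
          by_contra h
          have h1 : 0 < |A k.1 i| := abs_pos.mpr h
          nlinarith
        refine ⟨hAki, ?_⟩
        intro l hl
        by_contra hne2
        have hlt : |v l| < Mx := lt_of_le_of_ne (hMx l) hne2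
        have key' := key k
        rw [ht1, one_mul] at key'
        have h1 : inDeg A k.1 * Mx ≤ ∑ l' : {j : Fin n // j ≠ i}, |A k.1 l'.1| * |v l'| := by
          have e1 : |inDeg A k.1 * v k| = inDeg A k.1 * Mx := by
            rw [abs_mul, abs_of_nonneg (le_of_lt (hdpos _)), hk]
          calc inDeg A k.1 * Mx = |inDeg A k.1 * v k| := e1.symm
            _ = |∑ l' : {j : Fin n // j ≠ i}, |A k.1 l'.1| * v l'| := by rw [key']
            _ ≤ ∑ l' : {j : Fin n // j ≠ i}, abs (|A k.1 l'.1| * v l') :=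
                Finset.abs_sum_le_sum_abs _ _
            _ = ∑ l' : {j : Fin n // j ≠ i}, |A k.1 l'.1| * |v l'| := by
                refine Finset.sum_congr rfl fun l' _ => ?_
                rw [abs_mul, abs_abs]
        have h2 : ∑ l' : {j : Fin n // j ≠ i}, |A k.1 l'.1| * |v l'|
            < ∑ l' : {j : Fin n // j ≠ i}, |A k.1 l'.1| * Mx := by
          refine Finset.sum_lt_sum
            (fun l' _ => mul_le_mul_of_nonneg_left (hMx l') (abs_nonneg _))
            ⟨l, Finset.mem_univ l, mul_lt_mul_of_pos_left hlt (abs_pos.mpr hl)⟩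
        have h3 : ∑ l' : {j : Fin n // j ≠ i}, |A k.1 l'.1| * Mx
            = Mx * inDeg A k.1 := by
          rw [← Finset.sum_mul, hsub k, hAki]
          simp [mul_comm]
        nlinarith
      have descend : ∀ u : Fin n, Relation.TransGen (fun a b => A b a ≠ 0) i u →
          ∀ (hu : u ≠ i), |v ⟨u, hu⟩| ≠ Mx := by
        intro u hpath
        induction hpath with
        | single h =>
          intro hu hvu
          exact h (claim ⟨_, hu⟩ hvu).1
        | tail hpath' hstep ih =>
          rename_i b c
          intro hu hvu
          by_cases hb : b = i
          · subst hb; exact hstep (claim ⟨_, hu⟩ hvu).1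
          · exact ih hb ((claim ⟨_, hu⟩ hvu).2 ⟨b, hb⟩ hstep)
      have hpath := hsc i k₀.1 (Ne.symm k₀.prop)
      exact descend k₀.1 hpath k₀.prop rfl
    · -- t < 1
      have hb := habs k₀ rfl
      have h1 : t * (Mx * (inDeg A k₀.1 - |A k₀.1 i|))
          ≤ t * (Mx * inDeg A k₀.1) := by
        refine mul_le_mul_of_nonneg_left ?_ ht.1
        refine mul_le_mul_of_nonneg_left ?_ (le_of_lt hMxpos)
        linarith [abs_nonneg (A k₀.1 i)]
      nlinarith [mul_pos (mul_pos hMxpos (hdpos k₀.1)) (sub_pos.mpr ht1)]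
  have hnz : ∀ t ∈ Set.Icc (0:ℝ) 1, Matrix.det (M t) ≠ 0 := by
    intro t ht hdet
    obtain ⟨v, hv0, hv⟩ := Matrix.exists_mulVec_eq_zero_iff.mpr hdet
    exact hv0 (hker t ht v hv)
  have hcont : Continuous fun t => Matrix.det (M t) := by
    refine Continuous.matrix_det (continuous_matrix fun k l => ?_)
    simp only [hMdef, Matrix.of_apply]
    fun_prop
  have h0 : 0 < Matrix.det (M 0) := by
    have hM0 : M 0 = Matrix.diagonal (fun k : {j : Fin n // j ≠ i} => inDeg A k.1) := by
      ext k l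
      simp only [hMdef, Matrix.of_apply, zero_mul, sub_zero, Matrix.diagonal_apply]
      rcases eq_or_ne k l with rfl | hkl
      · simp
      · have hne : k.1 ≠ l.1 := fun h => hkl (Subtype.ext h)
        simp [hkl, hne]
    rw [hM0, Matrix.det_diagonal]
    exact Finset.prod_pos fun k _ => hdpos _
  by_contra hle
  push_neg at hle
  have h1ne := hnz 1 (by norm_num)
  have h1lt : Matrix.det (M 1) < 0 := lt_of_le_of_ne (hM1 ▸ hle) (by rw [← hM1]; exact hM1 ▸ h1ne)
  have hmem : (0:ℝ) ∈ Set.Icc (Matrix.det (M 1)) (Matrix.det (M 0)) :=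
    ⟨le_of_lt h1lt, le_of_lt h0⟩
  obtain ⟨t, ht, hft⟩ := intermediate_value_Icc' (by norm_num : (0:ℝ) ≤ 1)
    hcont.continuousOn hmem
  exact hnz t ht hft

end MinorPos

section Adjugate

lemma adjugate_diag_eq {m : ℕ} (M : Matrix (Fin (m+1)) (Fin (m+1)) ℝ) (i : Fin (m+1)) :
    M.adjugate i i
      = Matrix.det (M.submatrix (fun k : {j : Fin (m+1) // j ≠ i} => (k : Fin (m+1)))
          (fun k : {j : Fin (m+1) // j ≠ i} => (k : Fin (m+1)))) := by
  classical
  rw [Matrix.adjugate_apply, Matrix.det_succ_row _ i]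
  rw [Finset.sum_eq_single i]
  · rw [Matrix.updateRow_self, Pi.single_eq_same]
    have hsub : (M.updateRow i (Pi.single i 1)).submatrix i.succAbove i.succAbove
        = M.submatrix i.succAbove i.succAbove := by
      ext a b
      simp [Matrix.submatrix_apply, Matrix.updateRow_ne (Fin.succAbove_ne i a)]
    rw [hsub]
    have heq : (M.submatrix (fun k : {j : Fin (m+1) // j ≠ i} => (k : Fin (m+1)))
          (fun k : {j : Fin (m+1) // j ≠ i} => (k : Fin (m+1)))).det
        = (M.submatrix i.succAbove i.succAbove).det := by
      rw [← Matrix.det_submatrix_equiv_self (finSuccAboveEquiv i)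
        (M.submatrix (fun k : {j : Fin (m+1) // j ≠ i} => (k : Fin (m+1)))
          (fun k : {j : Fin (m+1) // j ≠ i} => (k : Fin (m+1))))]
      congr 1
    rw [heq, (Even.add_self (i : ℕ)).neg_one_pow]
    ring
  · intro b _ hb
    rw [Matrix.updateRow_self, Pi.single_eq_of_ne hb]
    ring
  · simp

end Adjugate

section WL

variable {n : ℕ}

lemma wT_lapBar (hn : 2 ≤ n) (A : Matrix (Fin n) (Fin n) ℝ)
    (hsc : StronglyConnected A) (jm : Fin n) :
    ∑ k, minorDet A k * lapBar A k jm = 0 := by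
  classical
  obtain ⟨m, rfl⟩ : ∃ m, n = m + 1 := ⟨n - 1, by omega⟩
  set N := lapBar A with hN
  have hones : N *ᵥ (fun _ => (1:ℝ)) = 0 := by
    funext k
    simp only [hN, lapBar, Matrix.mulVec, dotProduct, Matrix.sub_apply,
      Matrix.diagonal_apply, Matrix.of_apply, Pi.zero_apply, mul_one]
    rw [Finset.sum_sub_distrib, Finset.sum_ite_eq]
    simp [inDeg]
  have hdet : N.det = 0 := by
    rw [← Matrix.exists_mulVec_eq_zero_iff]
    refine ⟨fun _ => (1:ℝ), ?_, hones⟩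
    intro h
    have := congrFun h 0
    norm_num at this
  have hcol : ∀ k j : Fin (m+1), N.adjugate k j = minorDet A j := by
    intro k j
    have hcv : N *ᵥ (fun k' => N.adjugate k' j) = 0 := by
      funext q
      have h1 := congrFun (congrFun (Matrix.mul_adjugate N) q) j
      rw [hdet] at h1
      simp only [Matrix.mul_apply, zero_smul, Matrix.zero_apply] at h1
      simpa [Matrix.mulVec, dotProduct] using h1
    have h2 := lapBar_ker_const hn A hsc (fun k' => N.adjugate k' j) hcv k j
    rw [h2, adjugate_diag_eq N j]
    rfl
  calc ∑ k, minorDet A k * N k jm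
      = ∑ k, N.adjugate jm k * N k jm := by
        refine Finset.sum_congr rfl fun k _ => ?_
        rw [hcol jm k]
    _ = (N.adjugate * N) jm jm := (Matrix.mul_apply).symm
    _ = (N.det • (1 : Matrix (Fin (m+1)) (Fin (m+1)) ℝ)) jm jm := by rw [Matrix.adjugate_mul]
    _ = 0 := by rw [hdet]; simp

end WL

section QForm

variable {n : ℕ}

lemma sign_mul_abs' (a : ℝ) : Real.sign a * |a| = a := by
  rcases lt_trichotomy a 0 with h | h | h
  · rw [Real.sign_of_neg h, abs_of_neg h]; ring
  · simp [h]
  · rw [Real.sign_of_pos h, abs_of_pos h]; ring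

lemma abs_mul_sign_sq (a : ℝ) : |a| * Real.sign a ^ 2 = |a| := by
  rcases lt_trichotomy a 0 with h | h | h
  · rw [Real.sign_of_neg h]; ring
  · simp [h]
  · rw [Real.sign_of_pos h]; ring

lemma mirrorLap_apply (A : Matrix (Fin n) (Fin n) ℝ) (i j : Fin n) :
    mirrorLap A i j = (1/2) * (minorDet A i * lapOf A i j + lapOf A j i * minorDet A j) := by
  simp only [mirrorLap, Wmat, Matrix.smul_apply, Matrix.add_apply, smul_eq_mul,
    Matrix.diagonal_mul, Matrix.mul_diagonal, Matrix.transpose_apply]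

lemma mirrorLap_symm (A : Matrix (Fin n) (Fin n) ℝ) : (mirrorLap A)ᵀ = mirrorLap A := by
  simp only [mirrorLap, Matrix.transpose_smul, Matrix.transpose_add, Matrix.transpose_mul,
    Matrix.transpose_transpose, Wmat, Matrix.diagonal_transpose]
  rw [add_comm]

/-- The quadratic form of the mirror Laplacian equals half of `Φ_e`. -/
lemma qform_eq (hn : 2 ≤ n) (A : Matrix (Fin n) (Fin n) ℝ)
    (hsc : StronglyConnected A) (x : Fin n → ℝ) :
    2 * (x ⬝ᵥ (mirrorLap A *ᵥ x)) = PhiE A x := by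
  classical
  set w := minorDet A with hw
  set S := ∑ i, ∑ j, w i * lapOf A i j * x i * x j with hS
  have hQ : x ⬝ᵥ (mirrorLap A *ᵥ x) = S := by
    have h1 : x ⬝ᵥ (mirrorLap A *ᵥ x) = ∑ i, x i * ∑ j, mirrorLap A i j * x j := rfl
    rw [h1]
    have h2 : ∀ i, x i * ∑ j, mirrorLap A i j * x j
        = ∑ j, ((1/2) * (w i * lapOf A i j * x i * x j)
          + (1/2) * (lapOf A j i * w j * x i * x j)) := by
      intro i
      rw [Finset.mul_sum]
      refine Finset.sum_congr rfl fun j _ => ?_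
      rw [mirrorLap_apply]
      ring
    rw [Finset.sum_congr rfl fun i _ => h2 i]
    have h3 : ∑ i, ∑ j, ((1/2) * (w i * lapOf A i j * x i * x j)
          + (1/2) * (lapOf A j i * w j * x i * x j))
        = (1/2) * S + (1/2) * (∑ i, ∑ j, lapOf A j i * w j * x i * x j) := by
      simp only [Finset.sum_add_distrib, ← Finset.mul_sum, hS]
    rw [h3]
    have h4 : ∑ i, ∑ j, lapOf A j i * w j * x i * x j = S := by
      rw [Finset.sum_comm]
      refine Finset.sum_congr rfl fun i _ => Finset.sum_congr rfl fun j _ => ?_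
      ring
    rw [h4]; ring
  rw [hQ]
  -- expand PhiE
  have hterm : ∀ i j, w i * |A i j| * (x i - Real.sign (A i j) * x j) ^ 2
      = w i * |A i j| * x i ^ 2 - 2 * (w i * A i j * x i * x j) + w i * |A i j| * x j ^ 2 := by
    intro i j
    rcases lt_trichotomy (A i j) 0 with h | h | h
    · rw [Real.sign_of_neg h, abs_of_neg h]; ring
    · rw [h]; simp
    · rw [Real.sign_of_pos h, abs_of_pos h]; ring
  have hPhi : PhiE A x
      = (∑ i, ∑ j, w i * |A i j| * x i ^ 2)
        - 2 * (∑ i, ∑ j, w i * A i j * x i * x j)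
        + ∑ i, ∑ j, w i * |A i j| * x j ^ 2 := by
    rw [PhiE]
    rw [Finset.sum_congr rfl fun i _ => Finset.sum_congr rfl fun j _ => hterm i j]
    simp only [Finset.sum_add_distrib, Finset.sum_sub_distrib, ← Finset.mul_sum]
  -- first double sum
  have hT1 : ∑ i, ∑ j, w i * |A i j| * x i ^ 2 = ∑ i, w i * inDeg A i * x i ^ 2 := by
    refine Finset.sum_congr rfl fun i _ => ?_
    rw [inDeg, Finset.mul_sum, Finset.sum_mul]
  -- column sums via wT_lapBar
  have hcol : ∀ j, ∑ k, w k * |A k j| = w j * inDeg A j := by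
    intro j
    have h := wT_lapBar hn A hsc j
    simp only [lapBar, Matrix.sub_apply, Matrix.diagonal_apply, Matrix.of_apply] at h
    have h2 : ∑ k, (w k * (if k = j then inDeg A k else 0) - w k * |A k j|) = 0 := by
      conv_rhs => rw [← h]
      exact Finset.sum_congr rfl fun k _ => by ring
    rw [Finset.sum_sub_distrib] at h2
    have h3 : ∑ k, w k * (if k = j then inDeg A k else 0)
        = ∑ k, (if k = j then w k * inDeg A k else 0) := by
      refine Finset.sum_congr rfl fun k _ => ?_
      split <;> ring
    rw [h3, Finset.sum_ite_eq' Finset.univ j] at h2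
    simp only [Finset.mem_univ, if_true] at h2
    linarith
  have hT3 : ∑ i, ∑ j, w i * |A i j| * x j ^ 2 = ∑ j, w j * inDeg A j * x j ^ 2 := by
    rw [Finset.sum_comm]
    refine Finset.sum_congr rfl fun j _ => ?_
    have : ∑ i, w i * |A i j| * x j ^ 2 = (∑ i, w i * |A i j|) * x j ^ 2 := by
      rw [Finset.sum_mul]
    rw [this, hcol j]
  have hSplit : S = (∑ i, w i * inDeg A i * x i ^ 2) - ∑ i, ∑ j, w i * A i j * x i * x j := by
    rw [hS]
    have h1 : ∀ i j, w i * lapOf A i j * x i * x j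
        = (if i = j then w i * inDeg A i * x i * x j else 0) - w i * A i j * x i * x j := by
      intro i j
      simp only [lapOf, Matrix.sub_apply, Matrix.diagonal_apply]
      split <;> ring
    rw [Finset.sum_congr rfl fun i _ => Finset.sum_congr rfl fun j _ => h1 i j]
    simp only [Finset.sum_sub_distrib]
    congr 1
    refine Finset.sum_congr rfl fun i _ => ?_
    rw [Finset.sum_ite_eq Finset.univ i]
    simp only [Finset.mem_univ, if_true]
    ring
  rw [hPhi, hT1, hT3, hSplit]
  ring

end QForm

section PSD

variable {n : ℕ}

lemma psd_ker (M : Matrix (Fin n) (Fin n) ℝ) (hsym : Mᵀ = M)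
    (hpsd : ∀ y : Fin n → ℝ, 0 ≤ y ⬝ᵥ (M *ᵥ y)) (x : Fin n → ℝ)
    (hx : x ⬝ᵥ (M *ᵥ x) = 0) : M *ᵥ x = 0 := by
  classical
  funext k
  simp only [Pi.zero_apply]
  set b := (M *ᵥ x) k with hb
  set a := M k k with ha
  have hcolx : x ⬝ᵥ (M *ᵥ Pi.single k 1) = b := by
    rw [Matrix.mulVec_single]
    have : x ⬝ᵥ MulOpposite.op (1 : ℝ) • M.col k = ∑ i, M i k * x i := by
      simp [dotProduct, mul_comm]
    rw [this]
    have h2 : (M *ᵥ x) k = ∑ i, M k i * x i := rfl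
    have h3 : ∀ i, M i k = M k i := fun i => by
      conv_lhs => rw [← hsym]
      rfl
    rw [hb, h2]
    exact Finset.sum_congr rfl fun i _ => by rw [h3 i]
  have hek : (Pi.single k 1 : Fin n → ℝ) ⬝ᵥ (M *ᵥ x) = b := by
    rw [single_dotProduct, one_mul]
  have heMe : (Pi.single k 1 : Fin n → ℝ) ⬝ᵥ (M *ᵥ Pi.single k 1) = a := by
    rw [Matrix.mulVec_single_one, single_dotProduct, one_mul]
    rfl
  have hq : ∀ t : ℝ, 0 ≤ 2 * t * b + t ^ 2 * a := by
    intro t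
    have h := hpsd (x + t • (Pi.single k 1 : Fin n → ℝ))
    rw [Matrix.mulVec_add, Matrix.mulVec_smul] at h
    rw [add_dotProduct, smul_dotProduct, dotProduct_add,
      dotProduct_smul, dotProduct_add, dotProduct_smul] at h
    rw [hx, hcolx, hek, heMe] at h
    simp only [smul_eq_mul] at h
    nlinarith [h]
  by_contra hbne
  set c := (|a| + 1)⁻¹ with hc
  have hcpos : 0 < c := by positivity
  have hkey : c * (|a| + 1) = 1 := by
    rw [hc]; field_simp
  have h := hq (-(b * c))
  have hb2 : 0 < b ^ 2 := by positivity
  nlinarith [h, hb2, hcpos, hkey, le_abs_self a,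
    mul_nonneg (mul_nonneg (sq_nonneg b) (le_of_lt hcpos)) (le_of_lt hcpos),
    mul_nonneg (sub_nonneg.mpr (le_abs_self a)) (sq_nonneg (b * c)),
    mul_pos hb2 hcpos]

end PSD

section Main

variable {n : ℕ}

lemma PhiE_nonneg (hn : 2 ≤ n) (A : Matrix (Fin n) (Fin n) ℝ)
    (hsc : StronglyConnected A) (x : Fin n → ℝ) : 0 ≤ PhiE A x := by
  refine Finset.sum_nonneg fun i _ => Finset.sum_nonneg fun j _ => ?_
  have hw := minorDet_pos hn A hsc i
  positivity

lemma mirror_psd (hn : 2 ≤ n) (A : Matrix (Fin n) (Fin n) ℝ)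
    (hsc : StronglyConnected A) (y : Fin n → ℝ) : 0 ≤ y ⬝ᵥ (mirrorLap A *ᵥ y) := by
  have h := qform_eq hn A hsc y
  have h2 := PhiE_nonneg hn A hsc y
  linarith

theorem unbalanced_iff_nullspace_trivial' (hn : 2 ≤ n)
    (A : Matrix (Fin n) (Fin n) ℝ)
    (hdiag : ∀ i, A i i = 0) (hdigon : ∀ i j, 0 ≤ A i j * A j i)
    (hsc : StronglyConnected A) :
    ¬ StructBalanced A ↔ ∀ x : Fin n → ℝ, mirrorLap A *ᵥ x = 0 → x = 0 := by
  have hn0 : 0 < n := by omega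
  constructor
  · -- structurally unbalanced → trivial null space
    intro hnb x hx
    by_contra hx0
    have hphi : PhiE A x = 0 := by
      have h := qform_eq hn A hsc x
      rw [hx] at h
      simp only [dotProduct_zero, mul_zero] at h
      linarith
    have hnn : ∀ i j : Fin n, 0 ≤ minorDet A i * |A i j| * (x i - Real.sign (A i j) * x j) ^ 2 := by
      intro i j
      have hw := minorDet_pos hn A hsc i
      positivity
    have hterm0 : ∀ i j : Fin n,
        minorDet A i * |A i j| * (x i - Real.sign (A i j) * x j) ^ 2 = 0 := by
      intro i j
      have houter := (Finset.sum_eq_zero_iff_of_nonneg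
        (fun i _ => Finset.sum_nonneg fun j _ => hnn i j)).mp hphi i (Finset.mem_univ i)
      exact (Finset.sum_eq_zero_iff_of_nonneg fun j _ => hnn i j).mp houter j (Finset.mem_univ j)
    have hedge : ∀ i j : Fin n, A i j ≠ 0 → x i = Real.sign (A i j) * x j := by
      intro i j h
      have ht := hterm0 i j
      have hw := minorDet_pos hn A hsc i
      have ha : 0 < |A i j| := abs_pos.mpr h
      have hsq : (x i - Real.sign (A i j) * x j) ^ 2 = 0 := by
        by_contra hq
        have hgt : 0 < (x i - Real.sign (A i j) * x j) ^ 2 :=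
          lt_of_le_of_ne (sq_nonneg _) (Ne.symm hq)
        nlinarith [mul_pos (mul_pos hw ha) hgt]
      have := pow_eq_zero_iff (n := 2) (by norm_num) |>.mp hsq
      linarith [this]
    have habs_step : ∀ u v : Fin n, A v u ≠ 0 → |x v| = |x u| := by
      intro u v h
      rw [hedge v u h, abs_mul]
      rcases lt_trichotomy (A v u) 0 with hh | hh | hh
      · rw [Real.sign_of_neg hh]; norm_num
      · exact absurd hh h
      · rw [Real.sign_of_pos hh]; norm_num
    have habs : ∀ p q : Fin n, |x p| = |x q| := by
      have hstep : ∀ p q : Fin n, Relation.TransGen (fun u v => A v u ≠ 0) p q →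
          |x q| = |x p| := by
        intro p q hpath
        induction hpath with
        | single h => exact habs_step _ _ h
        | tail _ hstep2 ih => rw [habs_step _ _ hstep2, ih]
      intro p q
      rcases eq_or_ne p q with rfl | hpq
      · rfl
      · exact (hstep p q (hsc p q hpq)).symm
    obtain ⟨k, hk⟩ := Function.ne_iff.mp hx0
    have hc : 0 < |x k| := abs_pos.mpr hk
    apply hnb
    refine ⟨fun i => x i / |x k|, ?_, ?_⟩
    · intro i
      have hik : |x i| = |x k| := habs i k
      rcases abs_cases (x i) with ⟨h1, _⟩ | ⟨h1, _⟩
      · left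
        show x i / |x k| = 1
        have hxi : x i = |x k| := by rw [← hik, h1]
        rw [hxi, div_self (ne_of_gt hc)]
      · right
        show x i / |x k| = -1
        have hxi : x i = -|x k| := by rw [← hik]; linarith
        rw [hxi, neg_div, div_self (ne_of_gt hc)]
    · intro i j
      show 0 ≤ x i / |x k| * A i j * (x j / |x k|)
      rcases eq_or_ne (A i j) 0 with h0 | h0
      · rw [h0]; simp
      · have hxij := hedge i j h0
        have hs : Real.sign (A i j) * A i j = |A i j| := by
          rcases lt_trichotomy (A i j) 0 with hh | hh | hh
          · rw [Real.sign_of_neg hh, abs_of_neg hh]; ring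
          · exact absurd hh h0
          · rw [Real.sign_of_pos hh, abs_of_pos hh]; ring
        have hxx : x i * A i j * x j = |A i j| * x j ^ 2 := by
          calc x i * A i j * x j = (Real.sign (A i j) * A i j) * x j ^ 2 := by
                rw [hxij]; ring
            _ = |A i j| * x j ^ 2 := by rw [hs]
        have hnn2 : 0 ≤ x i * A i j * x j := by rw [hxx]; positivity
        have heq : x i / |x k| * A i j * (x j / |x k|) = (x i * A i j * x j) / |x k| ^ 2 := by
          field_simp
        rw [heq]
        positivity
  · -- trivial null space → structurally unbalanced
    intro htriv hbal
    obtain ⟨σ, hg, hpos⟩ := hbal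
    have hφ : PhiE A σ = 0 := by
      refine Finset.sum_eq_zero fun i _ => Finset.sum_eq_zero fun j _ => ?_
      rcases eq_or_ne (A i j) 0 with h0 | h0
      · rw [h0]; simp
      · have hzero : σ i - Real.sign (A i j) * σ j = 0 := by
          have hp := hpos i j
          rcases lt_trichotomy (A i j) 0 with hh | hh | hh
          · rw [Real.sign_of_neg hh]
            rcases hg i with hi | hi <;> rcases hg j with hj | hj <;>
              simp only [hi, hj] at hp ⊢ <;>
              first
                | (exfalso; nlinarith [hp, hh])
                | norm_num
          · exact absurd hh h0
          · rw [Real.sign_of_pos hh]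
            rcases hg i with hi | hi <;> rcases hg j with hj | hj <;>
              simp only [hi, hj] at hp ⊢ <;>
              first
                | (exfalso; nlinarith [hp, hh])
                | norm_num
        rw [hzero]
        ring
    have hq0 : σ ⬝ᵥ (mirrorLap A *ᵥ σ) = 0 := by
      have h := qform_eq hn A hsc σ
      rw [hφ] at h
      linarith
    have hker := psd_ker (mirrorLap A) (mirrorLap_symm A) (mirror_psd hn A hsc) σ hq0
    have hz := htriv σ hker
    have h0 := congrFun hz ⟨0, hn0⟩
    simp only [Pi.zero_apply] at h0
    rcases hg ⟨0, hn0⟩ with h | h <;> rw [h0] at h <;> norm_num at h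

end Main

/-- `G` is structurally unbalanced iff the null space of `L̂` is trivial. -/
theorem unbalanced_iff_nullspace_trivial (n : ℕ) (hn : 2 ≤ n)
    (A : Matrix (Fin n) (Fin n) ℝ)
    (hdiag : ∀ i, A i i = 0) (hdigon : ∀ i j, 0 ≤ A i j * A j i)
    (hsc : StronglyConnected A) :
    ¬ StructBalanced A ↔ ∀ x : Fin n → ℝ, mirrorLap A *ᵥ x = 0 → x = 0 := by
  exact unbalanced_iff_nullspace_trivial' hn A hdiag hdigon hsc
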